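/- arXiv:2408.08961 — 5 statements merged into one kernel-verified Lean document; each statement's English description precedes it below -/
import Mathlib

section
/- Let A be a unital complex Banach algebra and let a ∈ A be power-bounded (i.e. sup_{n∈ℕ} ‖aⁿ‖ < ∞). For each λ ∈ ℂ with |λ| = 1 the following are equivalent: (a) λ ∈ σ(a); (b) λ is an approximate eigenvalue of a, i.e. there exists a sequence (cₙ) in A with ‖cₙ‖ = 1 for all n and (λ·1 − a)cₙ → 0; (c) the left ideal A(λ·1 − a) is not equal to A; (d) the right ideal (λ·1 − a)A is not equal to A; (e) for every closed subalgebra B of A with 1 ∈ B, a ∈ B and B commutative, there exists an algebra character ψ : B → ℂ (nonzero, multiplicative, linear, continuous) with ψ(a) = λ; (f) there exists such a closed commutative unital subalgebra B containing a and an algebra character ψ on B with ψ(a) = λ; (g) for every complex polynomial p one has |p(λ)| ≤ ‖p(a)‖. -/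
open Filter Topology

section Aux

variable {A : Type*} [NormedRing A] [NormedAlgebra ℂ A] [CompleteSpace A]

/-- spectral bound for power bounded elements -/
lemma pb_spec_norm_le_one (a : A) {M : ℝ} (hM : ∀ n : ℕ, ‖a ^ n‖ ≤ M)
    {μ : ℂ} (hμ : μ ∈ spectrum ℂ a) : ‖μ‖ ≤ 1 := by
  by_contra h
  push_neg at h
  obtain ⟨n, hn⟩ := pow_unbounded_of_one_lt (M * ‖(1 : A)‖) h
  have h1 : μ ^ n ∈ spectrum ℂ (a ^ n) := spectrum.pow_image_subset a n ⟨μ, hμ, rfl⟩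
  have h2 : ‖μ ^ n‖ ≤ ‖a ^ n‖ * ‖(1 : A)‖ := spectrum.norm_le_norm_mul_of_mem h1
  have h3 : ‖a ^ n‖ * ‖(1 : A)‖ ≤ M * ‖(1 : A)‖ :=
    mul_le_mul_of_nonneg_right (hM n) (norm_nonneg _)
  rw [norm_pow] at h2
  linarith

/-- key analytic lemma: points of the unit circle in the spectrum of a power-bounded
element admit two-sided approximate inverses tending to zero. -/
lemma pb_key (a : A) {M : ℝ} (hM : ∀ n : ℕ, ‖a ^ n‖ ≤ M)
    {lam : ℂ} (hlam : ‖lam‖ = 1) (hs : lam ∈ spectrum ℂ a) :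
    ∃ c : ℕ → A, (∀ n, ‖c n‖ = 1) ∧
      Tendsto (fun n => (algebraMap ℂ A lam - a) * c n) atTop (𝓝 0) ∧
      (∀ n, c n * (algebraMap ℂ A lam - a) = (algebraMap ℂ A lam - a) * c n) := by
  have hd : ¬ IsUnit (algebraMap ℂ A lam - a) := spectrum.mem_iff.mp hs
  have hnt : Nontrivial A := by
    rcases subsingleton_or_nontrivial A with h | h
    · exact absurd (isUnit_of_subsingleton _) hd
    · exact h
  set d := algebraMap ℂ A lam - a with hd_def
  have key : ∀ n : ℕ, ∃ c : A, ‖c‖ = 1 ∧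
      ‖d * c‖ ≤ (1 / ((n : ℝ) + 1)) * (‖(1 : A)‖ ^ 2 + 1) ∧ c * d = d * c := by
    intro n
    set ε : ℝ := 1 / ((n : ℝ) + 1) with hε_def
    have hε : 0 < ε := by positivity
    set μ : ℂ := ((1 + ε : ℝ) : ℂ) * lam with hμ_def
    have hμnorm : ‖μ‖ = 1 + ε := by
      rw [hμ_def, norm_mul, hlam, mul_one, Complex.norm_real]
      exact abs_of_pos (by linarith)
    have hμs : μ ∉ spectrum ℂ a := by
      intro hmem
      have := pb_spec_norm_le_one a hM hmem
      rw [hμnorm] at this; linarith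
    have hu : IsUnit (algebraMap ℂ A μ - a) := spectrum.notMem_iff.mp hμs
    obtain ⟨u, huv⟩ := hu
    set r : A := ((u⁻¹ : Aˣ) : A) with hr_def
    have hur : (algebraMap ℂ A μ - a) * r = 1 := by rw [← huv]; exact u.mul_inv
    have hru : r * (algebraMap ℂ A μ - a) = 1 := by rw [← huv]; exact u.inv_mul
    have hlamμ : ‖lam - μ‖ = ε := by
      have : lam - μ = ((-ε : ℝ) : ℂ) * lam := by
        rw [hμ_def]; push_cast; ring
      rw [this, norm_mul, hlam, mul_one, Complex.norm_real, norm_neg]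
      exact abs_of_pos hε
    have hdcomp : d = (algebraMap ℂ A μ - a) + (lam - μ) • (1 : A) := by
      rw [hd_def, Algebra.algebraMap_eq_smul_one, Algebra.algebraMap_eq_smul_one, sub_smul]
      abel
    have hrne : r ≠ 0 := by
      intro h
      have : (0 : A) = 1 := by rw [← hur, h, mul_zero]
      exact one_ne_zero this.symm
    have hrpos : 0 < ‖r‖ := norm_pos_iff.mpr hrne
    -- lower bound on ‖r‖
    have hlow : ‖r‖⁻¹ ≤ ε * ‖(1 : A)‖ := by
      by_contra hcon
      push_neg at hcon
      have ht : ‖(lam - μ) • (1 : A)‖ < ‖((u⁻¹ : Aˣ) : A)‖⁻¹ := by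
        rw [norm_smul, hlamμ]; exact hcon
      apply hd
      have := (Units.add u ((lam - μ) • (1 : A)) ht).isUnit
      have hval : ((Units.add u ((lam - μ) • (1 : A)) ht : Aˣ) : A) = d := by
        show (u : A) + (lam - μ) • (1 : A) = d
        rw [huv, hdcomp]
      rwa [hval] at this
    -- the approximate inverse
    refine ⟨‖r‖⁻¹ • r, ?_, ?_, ?_⟩
    · rw [norm_smul, norm_inv, norm_norm, inv_mul_cancel₀ hrpos.ne']
    · have hdr : d * r = 1 + (lam - μ) • r := by
        rw [hdcomp, add_mul, hur, smul_mul_assoc, one_mul]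
      have hval : d * (‖r‖⁻¹ • r) = ‖r‖⁻¹ • (1 + (lam - μ) • r) := by
        rw [mul_smul_comm, hdr]
      rw [hval, norm_smul, norm_inv, norm_norm]
      have hbound : ‖(1 : A) + (lam - μ) • r‖ ≤ ‖(1 : A)‖ + ε * ‖r‖ := by
        calc ‖(1 : A) + (lam - μ) • r‖ ≤ ‖(1 : A)‖ + ‖(lam - μ) • r‖ := norm_add_le _ _
        _ = ‖(1 : A)‖ + ε * ‖r‖ := by rw [norm_smul, hlamμ]
      calc ‖r‖⁻¹ * ‖(1 : A) + (lam - μ) • r‖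
          ≤ ‖r‖⁻¹ * (‖(1 : A)‖ + ε * ‖r‖) :=
            mul_le_mul_of_nonneg_left hbound (by positivity)
        _ = ‖r‖⁻¹ * ‖(1 : A)‖ + ε * (‖r‖⁻¹ * ‖r‖) := by ring
        _ = ‖r‖⁻¹ * ‖(1 : A)‖ + ε := by rw [inv_mul_cancel₀ hrpos.ne', mul_one]
        _ ≤ (ε * ‖(1 : A)‖) * ‖(1 : A)‖ + ε :=
            add_le_add_left (mul_le_mul_of_nonneg_right hlow (norm_nonneg _)) _
        _ = ε * (‖(1 : A)‖ ^ 2 + 1) := by ring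
    · -- commutation
      have hdr : d * r = 1 + (lam - μ) • r := by
        rw [hdcomp, add_mul, hur, smul_mul_assoc, one_mul]
      have hrd : r * d = 1 + (lam - μ) • r := by
        rw [hdcomp, mul_add, hru, mul_smul_comm, mul_one]
      rw [smul_mul_assoc, mul_smul_comm, hdr, hrd]
  choose c hc1 hc2 hc3 using key
  refine ⟨c, hc1, ?_, hc3⟩
  rw [tendsto_zero_iff_norm_tendsto_zero]
  refine squeeze_zero (fun n => norm_nonneg _) hc2 ?_
  have h0 : Tendsto (fun n : ℕ => 1 / ((n : ℝ) + 1)) atTop (𝓝 0) :=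
    tendsto_one_div_add_atTop_nhds_zero_nat
  have := h0.mul_const (‖(1 : A)‖ ^ 2 + 1)
  rwa [zero_mul] at this

/-- multiplicative continuous linear functionals are norm-contractive -/
lemma char_norm_le {B : Type*} [NormedRing B] [NormedAlgebra ℂ B]
    (ψ : B →L[ℂ] ℂ) (hmul : ∀ x y : B, ψ (x * y) = ψ x * ψ y) (x : B) : ‖ψ x‖ ≤ ‖x‖ := by
  by_contra h
  push_neg at h
  have hψx : ψ x ≠ 0 := by
    intro h0; rw [h0, norm_zero] at h; exact absurd (norm_nonneg x) (not_le.mpr h)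
  set y : B := (ψ x)⁻¹ • x with hy_def
  have hψy : ψ y = 1 := by
    rw [hy_def, map_smul, smul_eq_mul, inv_mul_cancel₀ hψx]
  have hy : ‖y‖ < 1 := by
    rw [hy_def, norm_smul, norm_inv]
    rw [inv_mul_lt_one₀ (norm_pos_iff.mpr hψx)]
    exact h
  have hpow : ∀ n : ℕ, ψ (y ^ (n + 1)) = 1 := by
    intro n
    induction n with
    | zero => simpa using hψy
    | succ k ih => rw [pow_succ, hmul, ih, hψy, one_mul]
  have htend : Tendsto (fun n : ℕ => y ^ (n + 1)) atTop (𝓝 0) := by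
    rw [tendsto_zero_iff_norm_tendsto_zero]
    refine squeeze_zero (fun n => norm_nonneg _) (fun n => norm_pow_le' y n.succ_pos) ?_
    exact (tendsto_pow_atTop_nhds_zero_of_lt_one (norm_nonneg y) hy).comp
      (tendsto_add_atTop_nat 1)
  have h1 : Tendsto (fun n : ℕ => ψ (y ^ (n + 1))) atTop (𝓝 0) := by
    have := (ψ.continuous.tendsto 0).comp htend
    simpa [Function.comp_def] using this
  have h2 : Tendsto (fun _ : ℕ => (1 : ℂ)) atTop (𝓝 0) := by
    simpa only [funext hpow] using h1
  exact zero_ne_one (tendsto_nhds_unique h2 tendsto_const_nhds)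

end Aux

/-- For a power-bounded element `a` of a unital complex Banach algebra `A`
and `λ ∈ ℂ` with `|λ| = 1`, the following are equivalent:
(a) `λ ∈ σ(a)`; (b) `λ` is an approximate eigenvalue of `a`; (c) the left ideal
`A(λ·1 − a)` is not all of `A`; (d) the right ideal `(λ·1 − a)A` is not all of `A`;
(e) every closed commutative unital subalgebra `B` containing `a` admits an algebra
character `ψ` with `ψ(a) = λ`; (f) some such subalgebra admits such a character;
(g) `|p(λ)| ≤ ‖p(a)‖` for every complex polynomial `p`. -/
theorem unitary_spectrum_of_element_tfae
    {A : Type*} [NormedRing A] [NormedAlgebra ℂ A] [CompleteSpace A]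
    (a : A) (hpb : ∃ M : ℝ, ∀ n : ℕ, ‖a ^ n‖ ≤ M)
    (lam : ℂ) (hlam : ‖lam‖ = 1) :
    List.TFAE [
      -- (a) λ ∈ σ(a)
      lam ∈ spectrum ℂ a,
      -- (b) approximate eigenvalue
      ∃ c : ℕ → A, (∀ n, ‖c n‖ = 1) ∧
        Tendsto (fun n => (algebraMap ℂ A lam - a) * c n) atTop (𝓝 0),
      -- (c) the left ideal A(λ - a) is not all of A
      (Set.range fun b : A => b * (algebraMap ℂ A lam - a)) ≠ Set.univ,
      -- (d) the right ideal (λ - a)A is not all of A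
      (Set.range fun b : A => (algebraMap ℂ A lam - a) * b) ≠ Set.univ,
      -- (e) characters on every closed commutative unital subalgebra containing a
      ∀ B : Subalgebra ℂ A, IsClosed (B : Set A) → (∀ x y : B, x * y = y * x) →
        ∀ ha : a ∈ B, ∃ ψ : B →L[ℂ] ℂ, ψ ≠ 0 ∧
          (∀ x y : B, ψ (x * y) = ψ x * ψ y) ∧ ψ ⟨a, ha⟩ = lam,
      -- (f) a character on some closed commutative unital subalgebra containing a
      ∃ B : Subalgebra ℂ A, IsClosed (B : Set A) ∧ (∀ x y : B, x * y = y * x) ∧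
        ∃ ha : a ∈ B, ∃ ψ : B →L[ℂ] ℂ, ψ ≠ 0 ∧
          (∀ x y : B, ψ (x * y) = ψ x * ψ y) ∧ ψ ⟨a, ha⟩ = lam,
      -- (g) |p(λ)| ≤ ‖p(a)‖ for all polynomials p
      ∀ p : Polynomial ℂ, ‖p.eval lam‖ ≤ ‖(Polynomial.aeval a) p‖
    ] := by
  obtain ⟨M, hM⟩ := hpb
  tfae_have 1 → 2 := by
    intro h1
    obtain ⟨c, hc1, hc2, _⟩ := pb_key a hM hlam h1
    exact ⟨c, hc1, hc2⟩
  tfae_have 2 → 3 := by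
    rintro ⟨c, hc1, hc2⟩ h3
    have h1 : (1 : A) ∈ Set.range fun b : A => b * (algebraMap ℂ A lam - a) := by
      rw [h3]; trivial
    obtain ⟨b, hb⟩ := h1
    have hb' : b * (algebraMap ℂ A lam - a) = 1 := hb
    have hc0 : Tendsto (fun n => c n) atTop (𝓝 0) := by
      have h := hc2.const_mul b
      rw [mul_zero] at h
      have heq : ∀ n, b * ((algebraMap ℂ A lam - a) * c n) = c n := by
        intro n; rw [← mul_assoc, hb', one_mul]
      simpa only [heq] using h
    have hn := hc0.norm
    rw [norm_zero] at hn
    simp only [hc1] at hn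
    exact zero_ne_one (tendsto_nhds_unique hn tendsto_const_nhds)
  tfae_have 3 → 1 := by
    intro h3
    by_contra h1
    obtain ⟨u, huv⟩ := spectrum.notMem_iff.mp h1
    apply h3
    rw [Set.eq_univ_iff_forall]
    intro x
    refine ⟨x * ((u⁻¹ : Aˣ) : A), ?_⟩
    show x * ((u⁻¹ : Aˣ) : A) * (algebraMap ℂ A lam - a) = x
    rw [mul_assoc, ← huv, u.inv_mul, mul_one]
  tfae_have 1 → 4 := by
    intro h1 h4
    obtain ⟨c, hc1, hc2, hc3⟩ := pb_key a hM hlam h1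
    have h1' : (1 : A) ∈ Set.range fun b : A => (algebraMap ℂ A lam - a) * b := by
      rw [h4]; trivial
    obtain ⟨b, hb⟩ := h1'
    have hb' : (algebraMap ℂ A lam - a) * b = 1 := hb
    have hc0 : Tendsto (fun n => c n) atTop (𝓝 0) := by
      have h := hc2.mul_const b
      rw [zero_mul] at h
      have heq : ∀ n, ((algebraMap ℂ A lam - a) * c n) * b = c n := by
        intro n; rw [← hc3, mul_assoc, hb', mul_one]
      simpa only [heq] using h
    have hn := hc0.norm
    rw [norm_zero] at hn
    simp only [hc1] at hn
    exact zero_ne_one (tendsto_nhds_unique hn tendsto_const_nhds)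
  tfae_have 4 → 1 := by
    intro h4
    by_contra h1
    obtain ⟨u, huv⟩ := spectrum.notMem_iff.mp h1
    apply h4
    rw [Set.eq_univ_iff_forall]
    intro x
    refine ⟨((u⁻¹ : Aˣ) : A) * x, ?_⟩
    show (algebraMap ℂ A lam - a) * (((u⁻¹ : Aˣ) : A) * x) = x
    rw [← mul_assoc, ← huv, u.mul_inv, one_mul]
  tfae_have 1 → 5 := by
    intro h1 B hclosed hcomm ha
    letI : NormedCommRing B := { (inferInstance : NormedRing B) with mul_comm := hcomm }
    letI : CompleteSpace B := hclosed.completeSpace_coe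
    have hmem : lam ∈ spectrum ℂ (⟨a, ha⟩ : B) := spectrum.subset_subalgebra (⟨a, ha⟩ : B) h1
    obtain ⟨φ, hφ⟩ := WeakDual.CharacterSpace.mem_spectrum_iff_exists.mp hmem
    refine ⟨(φ : WeakDual ℂ B), ?_, fun x y => map_mul φ x y, hφ⟩
    intro h0
    have h1' : (φ : WeakDual ℂ B) (1 : B) = 1 := map_one φ
    rw [h0] at h1'
    exact one_ne_zero h1'.symm
  tfae_have 5 → 6 := by
    intro h5
    refine ⟨Algebra.elemental ℂ a, Algebra.elemental.isClosed ℂ a,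
      fun x y => mul_comm x y, Algebra.elemental.self_mem ℂ a, ?_⟩
    exact h5 _ (Algebra.elemental.isClosed ℂ a) (fun x y => mul_comm x y)
      (Algebra.elemental.self_mem ℂ a)
  tfae_have 6 → 7 := by
    rintro ⟨B, _, _, ha, ψ, hψ0, hmul, hψa⟩ p
    have h1 : ψ 1 = 1 := by
      by_cases hψ1 : ψ 1 = 0
      · exfalso
        apply hψ0
        ext x
        have : ψ x = ψ (x * 1) := by rw [mul_one]
        rw [this, hmul, hψ1, mul_zero]
        rfl
      · have h := hmul 1 1
        rw [mul_one] at h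
        exact (mul_left_cancel₀ hψ1 (by rw [← h, mul_one])).symm
    let Ψ : B →ₐ[ℂ] ℂ :=
      { toFun := ψ
        map_one' := h1
        map_mul' := hmul
        map_zero' := map_zero ψ
        map_add' := map_add ψ
        commutes' := fun c => by
          show ψ (algebraMap ℂ B c) = algebraMap ℂ ℂ c
          rw [Algebra.algebraMap_eq_smul_one, Algebra.algebraMap_eq_smul_one,
            ψ.map_smul, h1] }
    have key : Ψ (Polynomial.aeval (⟨a, ha⟩ : B) p) = p.eval lam := by
      rw [← Polynomial.aeval_algHom_apply]
      show (Polynomial.aeval (ψ (⟨a, ha⟩ : B))) p = p.eval lam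
      rw [hψa]
      exact congrFun (Polynomial.coe_aeval_eq_eval lam) p
    have hcoe : ((Polynomial.aeval (⟨a, ha⟩ : B) p : B) : A) = Polynomial.aeval a p := by
      have := Polynomial.aeval_algHom_apply B.val (⟨a, ha⟩ : B) p
      simp only [Subalgebra.coe_val] at this
      exact this.symm
    calc ‖p.eval lam‖ = ‖ψ (Polynomial.aeval (⟨a, ha⟩ : B) p)‖ := by
          rw [← key]; rfl
      _ ≤ ‖(Polynomial.aeval (⟨a, ha⟩ : B) p : B)‖ := char_norm_le ψ hmul _
      _ = ‖(Polynomial.aeval a) p‖ := by rw [← hcoe]; rfl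
  tfae_have 7 → 1 := by
    intro h7
    by_contra h1
    obtain ⟨u, huv⟩ := spectrum.notMem_iff.mp h1
    set v : A := ((u⁻¹ : Aˣ) : A) with hv_def
    obtain ⟨N, hN⟩ := exists_nat_gt (‖v‖ * (‖(1 : A)‖ + M))
    -- the polynomial pₙ = ∑_{k<n} λ^{n-1-k} X^k with n = N
    set p : Polynomial ℂ :=
      ∑ k ∈ Finset.range N, Polynomial.C (lam ^ (N - 1 - k)) * Polynomial.X ^ k with hp_def
    have heval : p.eval lam = N * lam ^ (N - 1) := by
      rw [hp_def]
      rw [Polynomial.eval_finset_sum]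
      have : ∀ k ∈ Finset.range N,
          (Polynomial.C (lam ^ (N - 1 - k)) * Polynomial.X ^ k).eval lam = lam ^ (N - 1) := by
        intro k hk
        rw [Finset.mem_range] at hk
        rw [Polynomial.eval_mul, Polynomial.eval_C, Polynomial.eval_pow, Polynomial.eval_X,
          ← pow_add]
        congr 1
        omega
      rw [Finset.sum_congr rfl this, Finset.sum_const, Finset.card_range, nsmul_eq_mul]
    have hevalnorm : ‖p.eval lam‖ = N := by
      rw [heval, norm_mul, norm_pow, hlam, one_pow, mul_one, Complex.norm_natCast]
    -- aeval a p
    set S : A := Polynomial.aeval a p with hS_def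
    have hSsum : S = ∑ k ∈ Finset.range N, lam ^ (N - 1 - k) • a ^ k := by
      rw [hS_def, hp_def, map_sum]
      refine Finset.sum_congr rfl fun k _ => ?_
      rw [map_mul, Polynomial.aeval_C, Polynomial.aeval_X_pow, Algebra.smul_def]
    -- telescoping identity
    have hkey : (algebraMap ℂ A lam - a) * S = lam ^ N • (1 : A) - a ^ N := by
      rw [hSsum, Finset.mul_sum]
      have hterm : ∀ k ∈ Finset.range N,
          (algebraMap ℂ A lam - a) * (lam ^ (N - 1 - k) • a ^ k)
            = lam ^ (N - k) • a ^ k - lam ^ (N - (k + 1)) • a ^ (k + 1) := by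
        intro k hk
        rw [Finset.mem_range] at hk
        rw [sub_mul, mul_smul_comm, mul_smul_comm,
          Algebra.algebraMap_eq_smul_one, smul_mul_assoc, one_mul, smul_smul,
          ← pow_succ, ← pow_succ']
        have e1 : N - 1 - k + 1 = N - k := by omega
        have e2 : N - 1 - k = N - (k + 1) := by omega
        rw [e1, e2]
      rw [Finset.sum_congr rfl hterm, Finset.sum_range_sub' (fun k => lam ^ (N - k) • a ^ k)]
      simp
    have hS : S = v * (lam ^ N • (1 : A) - a ^ N) := by
      rw [← hkey, ← mul_assoc, hv_def, ← huv, u.inv_mul, one_mul]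
    have hSnorm : ‖S‖ ≤ ‖v‖ * (‖(1 : A)‖ + M) := by
      rw [hS]
      calc ‖v * (lam ^ N • (1 : A) - a ^ N)‖ ≤ ‖v‖ * ‖lam ^ N • (1 : A) - a ^ N‖ :=
            norm_mul_le _ _
        _ ≤ ‖v‖ * (‖lam ^ N • (1 : A)‖ + ‖a ^ N‖) :=
            mul_le_mul_of_nonneg_left (norm_sub_le _ _) (norm_nonneg _)
        _ ≤ ‖v‖ * (‖(1 : A)‖ + M) := by
            refine mul_le_mul_of_nonneg_left ?_ (norm_nonneg _)
            refine add_le_add ?_ (hM N)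
            rw [norm_smul, norm_pow, hlam, one_pow, one_mul]
    have := h7 p
    rw [hevalnorm, ← hS_def] at this
    linarith
  tfae_finish
end

section
/- Let S be a commutative monoid, A a unital complex Banach algebra, and T : S → A a bounded representation. The following are equivalent: (a) σ_uni(T) = ∅; (b) there is an s ∈ S with T(s)ⁿ → 0 in A as n → ∞; (c) 0 lies in the norm closure of T(S) in A; (d) the net (T(s))_{s∈S} converges to 0 in norm, i.e. for every ε > 0 there is s₀ ∈ S such that ‖T(s)‖ ≤ ε for every s ∈ S with s₀ ≤ s; (e) there is an s ∈ S with ‖T(s)‖ < 1. -/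
open Filter Topology

universe u

section Defs

variable {S : Type*} [AddCommMonoid S]

/-- A representation of a commutative monoid `S` in a monoid `A`. -/
def IsRepresentation {A : Type*} [Monoid A] (T : S → A) : Prop :=
  T 0 = 1 ∧ ∀ s t : S, T (s + t) = T s * T t

/-- A bounded representation. -/
def IsBoundedRep {A : Type*} [Monoid A] [Norm A] (T : S → A) : Prop :=
  IsRepresentation T ∧ ∃ M : ℝ, ∀ s : S, ‖T s‖ ≤ M

/-- A unitary semigroup character of `S`. -/
def IsUnitaryChar (χ : S → ℂ) : Prop :=
  χ 0 = 1 ∧ (∀ s t : S, χ (s + t) = χ s * χ t) ∧ ∀ s : S, ‖χ s‖ = 1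

/-- Membership in the unitary spectrum of a bounded representation:
`χ` is a unitary semigroup character satisfying
`|∑ₖ βₖ χ(sₖ)| ≤ ‖∑ₖ βₖ T(sₖ)‖` for all finite families. -/
def InUniSpec {A : Type*} [NormedRing A] [NormedAlgebra ℂ A] (T : S → A) (χ : S → ℂ) : Prop :=
  IsUnitaryChar χ ∧ ∀ (n : ℕ) (s : Fin n → S) (β : Fin n → ℂ),
    ‖∑ k, β k * χ (s k)‖ ≤ ‖∑ k, β k • T (s k)‖

/-- A directed index set for nets: a nonempty preordered set in which every pair
of elements has an upper bound. -/
structure DirIdx : Type (u + 1) where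
  J : Type u
  r : J → J → Prop
  refl : ∀ j, r j j
  trans : ∀ {a b c}, r a b → r b c → r a c
  directed : ∀ a b, ∃ k, r a k ∧ r b k
  nonempty : Nonempty J

/-- Convergence of a net in a (semi)normed additive group. -/
def TendstoAlong {A : Type*} [SeminormedAddGroup A] (D : DirIdx.{u}) (f : D.J → A) (L : A) : Prop :=
  ∀ ε > 0, ∃ j₀ : D.J, ∀ j : D.J, D.r j₀ j → ‖f j - L‖ ≤ ε

end Defs

/-! ### Auxiliary constructions for the hard implication (a) → (e) -/

namespace StabAux

/-- If all powers of a nonnegative real (beyond the first) are bounded, it is at most `1`. -/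
lemma le_one_of_pow_le {u C : ℝ} (hu : 0 ≤ u) (h : ∀ n : ℕ, u ^ (n + 1) ≤ C) : u ≤ 1 := by
  by_contra hlt
  push_neg at hlt
  obtain ⟨n, hn⟩ := ((tendsto_pow_atTop_atTop_of_one_lt hlt).eventually_gt_atTop C).exists
  have h1 : u ^ n ≤ u ^ (n + 1) := pow_le_pow_right₀ hlt.le (Nat.le_succ n)
  exact absurd ((h n).trans_lt (hn.trans_le h1)) (lt_irrefl _)

/-- Comparison of two nonnegative reals from bounds on powers. -/
lemma le_of_pow_le_pow {u v C : ℝ} (hu : 0 ≤ u) (hv : 0 ≤ v) (hC : 0 ≤ C)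
    (h : ∀ n : ℕ, u ^ (n + 1) ≤ C * v ^ (n + 1)) : u ≤ v := by
  rcases eq_or_lt_of_le hv with rfl | hvpos
  · have := h 0
    simpa using this.trans_eq (by ring)
  · have key : u / v ≤ 1 := by
      refine le_one_of_pow_le (div_nonneg hu hvpos.le) (C := C) fun n => ?_
      rw [div_pow, div_le_iff₀ (pow_pos hvpos _)]
      exact h n
    calc u = (u / v) * v := by field_simp
    _ ≤ 1 * v := mul_le_mul_of_nonneg_right key hvpos.le
    _ = v := one_mul v

end StabAux

/-- `a ≤ (⨅ i, f i) * c` from pointwise bounds, `c ≥ 0`. -/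
lemma le_ciInf_mul_right {ι : Type*} [Nonempty ι] {a c : ℝ} {f : ι → ℝ}
    (hc : 0 ≤ c) (h : ∀ i, a ≤ f i * c) : a ≤ (⨅ i, f i) * c := by
  rcases eq_or_lt_of_le hc with rfl | hcpos
  · simpa using (h (Classical.arbitrary ι)).trans_eq (by ring)
  · rw [← div_le_iff₀ hcpos]
    refine le_ciInf fun i => ?_
    rw [div_le_iff₀ hcpos]
    exact h i

/-- `a ≤ c * ⨅ i, f i` from pointwise bounds, `c ≥ 0`. -/
lemma le_mul_ciInf' {ι : Type*} [Nonempty ι] {a c : ℝ} {f : ι → ℝ}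
    (hc : 0 ≤ c) (h : ∀ i, a ≤ c * f i) : a ≤ c * ⨅ i, f i := by
  rw [mul_comm]
  exact le_ciInf_mul_right hc fun i => (h i).trans_eq (mul_comm _ _)

section Construction

variable {S : Type*} [AddCommMonoid S] {A : Type*} [NormedRing A] [NormedAlgebra ℂ A]

variable (T : S → A) (hT : IsBoundedRep T)

/-- The representation, as a monoid homomorphism on `Multiplicative S`. -/
def repHom : Multiplicative S →* A where
  toFun s := T s.toAdd
  map_one' := hT.1.1
  map_mul' s t := hT.1.2 s.toAdd t.toAdd

/-- The induced algebra homomorphism on the monoid algebra. -/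
noncomputable def phi : MonoidAlgebra ℂ (Multiplicative S) →ₐ[ℂ] A :=
  MonoidAlgebra.lift ℂ A (Multiplicative S) (repHom T hT)

/-- The canonical basis elements of the monoid algebra. -/
noncomputable def dl (s : S) : MonoidAlgebra ℂ (Multiplicative S) :=
  MonoidAlgebra.of ℂ (Multiplicative S) (Multiplicative.ofAdd s)

lemma dl_zero : dl (0 : S) = (1 : MonoidAlgebra ℂ (Multiplicative S)) := rfl

lemma dl_add (s t : S) : dl (s + t) = dl s * dl t := by
  simp only [dl, ofAdd_add, map_mul]

lemma dl_nsmul (n : ℕ) (s : S) : dl (n • s) = (dl s : MonoidAlgebra ℂ (Multiplicative S)) ^ n := by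
  simp only [dl, ofAdd_nsmul, map_pow]

lemma phi_dl (s : S) : phi T hT (dl s) = T s := by
  rw [phi, dl, MonoidAlgebra.lift_of]; rfl

/-- A convenient upper bound for the representation. -/
noncomputable def M0 : ℝ := max (Classical.choose hT.2) 1

lemma norm_T_le (s : S) : ‖T s‖ ≤ M0 T hT :=
  (Classical.choose_spec hT.2 s).trans (le_max_left _ _)

lemma one_le_M0 : 1 ≤ M0 T hT := le_max_right _ _

lemma M0_nonneg : 0 ≤ M0 T hT := zero_le_one.trans (one_le_M0 T hT)

lemma commute_T_phi (u : S) (x : MonoidAlgebra ℂ (Multiplicative S)) :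
    T u * phi T hT x = phi T hT x * T u := by
  induction x using MonoidAlgebra.induction_on with
  | of g =>
      have : phi T hT (MonoidAlgebra.of ℂ (Multiplicative S) g) = T g.toAdd := by
        rw [phi, MonoidAlgebra.lift_of]; rfl
      rw [this, ← hT.1.2, ← hT.1.2, add_comm]
  | add f g hf hg => rw [map_add, mul_add, add_mul, hf, hg]
  | smul r f hf => rw [map_smul, mul_smul_comm, smul_mul_assoc, hf]

/-- The tail supremum of the norms `‖T (s₀ + r) · Φ(x)‖`. -/
noncomputable def gn (x : MonoidAlgebra ℂ (Multiplicative S)) (s₀ : S) : ℝ :=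
  ⨆ r : S, ‖T (s₀ + r) * phi T hT x‖

/-- The limsup seminorm. -/
noncomputable def qn (x : MonoidAlgebra ℂ (Multiplicative S)) : ℝ :=
  ⨅ s₀ : S, gn T hT x s₀

lemma bddAbove_gn (x : MonoidAlgebra ℂ (Multiplicative S)) (s₀ : S) :
    BddAbove (Set.range fun r : S => ‖T (s₀ + r) * phi T hT x‖) := by
  refine ⟨M0 T hT * ‖phi T hT x‖, ?_⟩
  rintro y ⟨r, rfl⟩
  exact (norm_mul_le _ _).trans
    (mul_le_mul_of_nonneg_right (norm_T_le T hT _) (norm_nonneg _))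

lemma le_gn (x : MonoidAlgebra ℂ (Multiplicative S)) (s₀ r : S) :
    ‖T (s₀ + r) * phi T hT x‖ ≤ gn T hT x s₀ :=
  le_ciSup (bddAbove_gn T hT x s₀) r

lemma gn_nonneg (x : MonoidAlgebra ℂ (Multiplicative S)) (s₀ : S) : 0 ≤ gn T hT x s₀ :=
  (norm_nonneg _).trans (le_gn T hT x s₀ 0)

lemma gn_le (x : MonoidAlgebra ℂ (Multiplicative S)) (s₀ : S) :
    gn T hT x s₀ ≤ M0 T hT * ‖phi T hT x‖ :=
  ciSup_le fun r => (norm_mul_le _ _).trans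
    (mul_le_mul_of_nonneg_right (norm_T_le T hT _) (norm_nonneg _))

lemma qn_le_gn (x : MonoidAlgebra ℂ (Multiplicative S)) (s₀ : S) :
    qn T hT x ≤ gn T hT x s₀ := by
  refine ciInf_le ⟨0, ?_⟩ s₀
  rintro y ⟨s₁, rfl⟩
  exact gn_nonneg T hT x s₁

lemma qn_nonneg (x : MonoidAlgebra ℂ (Multiplicative S)) : 0 ≤ qn T hT x :=
  le_ciInf fun s₀ => gn_nonneg T hT x s₀

lemma qn_le (x : MonoidAlgebra ℂ (Multiplicative S)) : qn T hT x ≤ M0 T hT * ‖phi T hT x‖ :=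
  (qn_le_gn T hT x 0).trans (gn_le T hT x 0)

lemma qn_zero : qn T hT (0 : MonoidAlgebra ℂ (Multiplicative S)) = 0 := by
  have : ∀ s₀ : S, gn T hT (0 : MonoidAlgebra ℂ (Multiplicative S)) s₀ = 0 := by
    intro s₀
    simp only [gn, map_zero, mul_zero, norm_zero]
    exact ciSup_const
  simp only [qn, this]
  exact ciInf_const

lemma qn_neg (x : MonoidAlgebra ℂ (Multiplicative S)) : qn T hT (-x) = qn T hT x := by
  simp only [qn, gn, map_neg, mul_neg, norm_neg]

lemma qn_add (x y : MonoidAlgebra ℂ (Multiplicative S)) :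
    qn T hT (x + y) ≤ qn T hT x + qn T hT y := by
  have key : ∀ s₀ s₁ : S, qn T hT (x + y) ≤ gn T hT x s₀ + gn T hT y s₁ := by
    intro s₀ s₁
    refine (qn_le_gn T hT (x + y) (s₀ + s₁)).trans (ciSup_le fun r => ?_)
    have e1 : s₀ + s₁ + r = s₀ + (s₁ + r) := by rw [add_assoc]
    have e2 : s₀ + s₁ + r = s₁ + (s₀ + r) := by
      rw [add_comm s₀ s₁, add_assoc]
    calc ‖T (s₀ + s₁ + r) * phi T hT (x + y)‖
        = ‖T (s₀ + s₁ + r) * phi T hT x + T (s₀ + s₁ + r) * phi T hT y‖ := by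
          rw [map_add, mul_add]
      _ ≤ ‖T (s₀ + s₁ + r) * phi T hT x‖ + ‖T (s₀ + s₁ + r) * phi T hT y‖ := norm_add_le _ _
      _ ≤ gn T hT x s₀ + gn T hT y s₁ := by
          refine add_le_add ?_ ?_
          · rw [e1]; exact le_gn T hT x s₀ (s₁ + r)
          · rw [e2]; exact le_gn T hT y s₁ (s₀ + r)
  have step1 : ∀ s₁ : S, qn T hT (x + y) - gn T hT y s₁ ≤ qn T hT x := fun s₁ =>
    le_ciInf fun s₀ => sub_le_iff_le_add.2 (key s₀ s₁)
  have step2 : qn T hT (x + y) - qn T hT x ≤ qn T hT y :=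
    le_ciInf fun s₁ => by linarith [step1 s₁]
  linarith

lemma qn_mul (x y : MonoidAlgebra ℂ (Multiplicative S)) :
    qn T hT (x * y) ≤ qn T hT x * qn T hT y := by
  have key : ∀ s₀ s₁ : S, qn T hT (x * y) ≤ gn T hT x s₀ * gn T hT y s₁ := by
    intro s₀ s₁
    refine (qn_le_gn T hT (x * y) (s₀ + s₁)).trans (ciSup_le fun r => ?_)
    have e : s₀ + s₁ + r = (s₀ + r) + s₁ := by
      rw [add_assoc, add_comm s₁ r, ← add_assoc]
    calc ‖T (s₀ + s₁ + r) * phi T hT (x * y)‖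
        = ‖(T (s₀ + r) * phi T hT x) * (T s₁ * phi T hT y)‖ := by
          rw [e, hT.1.2 (s₀ + r) s₁, map_mul,
            mul_assoc (T (s₀ + r)) (T s₁), ← mul_assoc (T s₁) (phi T hT x),
            commute_T_phi T hT s₁ x, mul_assoc (phi T hT x), ← mul_assoc (T (s₀ + r))]
      _ ≤ ‖T (s₀ + r) * phi T hT x‖ * ‖T s₁ * phi T hT y‖ := norm_mul_le _ _
      _ ≤ gn T hT x s₀ * gn T hT y s₁ := by
          refine mul_le_mul (le_gn T hT x s₀ r) ?_ (norm_nonneg _) (gn_nonneg T hT x s₀)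
          simpa [add_zero] using le_gn T hT y s₁ 0
  have step1 : ∀ s₁ : S, qn T hT (x * y) ≤ qn T hT x * gn T hT y s₁ := fun s₁ =>
    le_ciInf_mul_right (gn_nonneg T hT y s₁) fun s₀ => key s₀ s₁
  exact le_mul_ciInf' (qn_nonneg T hT x) step1

lemma qn_smul (c : ℂ) (x : MonoidAlgebra ℂ (Multiplicative S)) :
    qn T hT (c • x) ≤ ‖c‖ * qn T hT x := by
  have key : ∀ s₀ : S, qn T hT (c • x) ≤ ‖c‖ * gn T hT x s₀ := by
    intro s₀
    refine (qn_le_gn T hT (c • x) s₀).trans (ciSup_le fun r => ?_)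
    rw [map_smul, mul_smul_comm, norm_smul]
    exact mul_le_mul_of_nonneg_left (le_gn T hT x s₀ r) (norm_nonneg c)
  exact le_mul_ciInf' (norm_nonneg c) key

lemma qn_one_le : qn T hT (1 : MonoidAlgebra ℂ (Multiplicative S)) ≤ M0 T hT :=
  (qn_le_gn T hT 1 0).trans (ciSup_le fun r => by
    simpa [map_one, mul_one] using norm_T_le T hT (0 + r))

lemma one_le_qn_one (h1 : ∀ s, 1 ≤ ‖T s‖) :
    1 ≤ qn T hT (1 : MonoidAlgebra ℂ (Multiplicative S)) :=
  le_ciInf fun s₀ => (h1 s₀).trans (by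
    simpa [map_one, mul_one, add_zero] using le_gn T hT 1 s₀ 0)

lemma qn_pow_le (x : MonoidAlgebra ℂ (Multiplicative S)) (p : ℕ) (hp : 0 < p) :
    qn T hT (x ^ p) ≤ M0 T hT * ‖phi T hT x‖ ^ p :=
  (qn_le T hT _).trans (mul_le_mul_of_nonneg_left
    (by rw [map_pow]; exact norm_pow_le' _ hp) (M0_nonneg T hT))

lemma qn_dl_le (u : S) : qn T hT (dl u) ≤ M0 T hT :=
  (qn_le_gn T hT (dl u) 0).trans (ciSup_le fun r => by
    rw [phi_dl, ← hT.1.2]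
    exact norm_T_le T hT _)

lemma one_le_qn_dl (h1 : ∀ s, 1 ≤ ‖T s‖) (u : S) : 1 ≤ qn T hT (dl u) :=
  le_ciInf fun s₀ => (h1 (s₀ + u)).trans (by
    have := le_gn T hT (dl u) s₀ 0
    rwa [phi_dl, ← hT.1.2, add_zero] at this)

end Construction

section BqType

variable {S : Type*} [AddCommMonoid S] {A : Type*} [NormedRing A] [NormedAlgebra ℂ A]

/-- The monoid algebra of `S`, to be equipped with the limsup seminorm coming from `T`. -/
def Bq (T : S → A) (_hT : IsBoundedRep T) : Type _ := MonoidAlgebra ℂ (Multiplicative S)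

variable (T : S → A) (hT : IsBoundedRep T)

noncomputable instance : CommRing (Bq T hT) :=
  inferInstanceAs (CommRing (MonoidAlgebra ℂ (Multiplicative S)))

noncomputable instance : Algebra ℂ (Bq T hT) :=
  inferInstanceAs (Algebra ℂ (MonoidAlgebra ℂ (Multiplicative S)))

/-- The limsup seminorm as an `AddGroupSeminorm`. -/
noncomputable def bqSeminorm : AddGroupSeminorm (Bq T hT) where
  toFun := qn T hT
  map_zero' := qn_zero T hT
  add_le' := qn_add T hT
  neg' := qn_neg T hT

noncomputable instance : SeminormedCommRing (Bq T hT) :=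
  { AddGroupSeminorm.toSeminormedAddCommGroup (bqSeminorm T hT),
    (inferInstance : CommRing (Bq T hT)) with
    norm_mul_le := fun x y => qn_mul T hT x y }

noncomputable instance : NormedAlgebra ℂ (Bq T hT) :=
  { (inferInstance : Algebra ℂ (Bq T hT)) with
    norm_smul_le := fun c x => qn_smul T hT c x }

lemma bq_norm_def (x : Bq T hT) : ‖x‖ = qn T hT x := rfl

end BqType

section Existence

open UniformSpace (Completion)
open scoped ENNReal NNReal

variable {S : Type*} [AddCommMonoid S] {A : Type*} [NormedRing A] [NormedAlgebra ℂ A]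

/-- **Hard direction**: if `‖T s‖ ≥ 1` for every `s`, the unitary spectrum is nonempty. -/
theorem exists_uni_char (T : S → A) (hT : IsBoundedRep T) (h1 : ∀ s, 1 ≤ ‖T s‖) :
    ∃ χ : S → ℂ, InUniSpec T χ := by
  classical
  -- the completed commutative Banach algebra
  set C := Completion (Bq T hT) with hC
  -- the canonical images of the `T s`
  set bq : S → Bq T hT := fun s => dl s with hbq
  set b : S → C := fun s => ((bq s : Bq T hT) : C) with hb
  have hbq_add : ∀ s t : S, bq (s + t) = bq s * bq t := fun s t => dl_add s t
  have hbq_zero : bq 0 = 1 := dl_zero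
  have hb_add : ∀ s t : S, b (s + t) = b s * b t := fun s t => by
    rw [hb]; simp only [hbq_add]
    exact UniformSpace.Completion.coe_mul _ _
  have hb_zero : b 0 = 1 := by
    rw [hb]; simp only [hbq_zero]; exact UniformSpace.Completion.coe_one _
  have hnorm_coe : ∀ x : Bq T hT, ‖(x : C)‖ = qn T hT x := fun x =>
    UniformSpace.Completion.norm_coe x
  have hpow_coe : ∀ (y : Bq T hT) (p : ℕ), ((y ^ p : Bq T hT) : C) = (y : C) ^ p := by
    intro y p
    induction p with
    | zero => simp only [pow_zero]; exact UniformSpace.Completion.coe_one _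
    | succ p ih => rw [pow_succ, pow_succ, UniformSpace.Completion.coe_mul, ih]
  have hbq_pow : ∀ (u : S) (p : ℕ), bq u ^ p = bq (p • u) := fun u p => (dl_nsmul p u).symm
  have hnorm_one_C : ‖(1 : C)‖ ≤ M0 T hT := by
    rw [← UniformSpace.Completion.coe_one (Bq T hT), hnorm_coe]
    exact qn_one_le T hT
  have hone_le_b : ∀ u : S, (1 : ℝ) ≤ ‖b u‖ := fun u => by
    rw [hb, hnorm_coe]; exact one_le_qn_dl T hT h1 u
  have hb_le : ∀ u : S, ‖b u‖ ≤ M0 T hT := fun u => by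
    rw [hb, hnorm_coe]; exact qn_dl_le T hT u
  haveI : Nontrivial C := by
    refine ⟨1, 0, fun h => ?_⟩
    have h1C : (1 : ℝ) ≤ ‖(1 : C)‖ := by
      rw [← UniformSpace.Completion.coe_one (Bq T hT), hnorm_coe]
      exact one_le_qn_one T hT h1
    rw [h, norm_zero] at h1C
    linarith
  -- upper bound for characters
  have hupper : ∀ (φ : WeakDual.characterSpace ℂ C) (t : S), ‖φ (b t)‖ ≤ 1 := by
    intro φ t
    refine StabAux.le_one_of_pow_le (norm_nonneg _) (C := M0 T hT * M0 T hT) fun n => ?_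
    have e1 : ‖φ (b t)‖ ^ (n + 1) = ‖φ (b t ^ (n + 1))‖ := by
      rw [← norm_pow, ← map_pow]
    have e2 : (b t : C) ^ (n + 1) = ((bq ((n+1) • t) : Bq T hT) : C) := by
      rw [hb, ← hpow_coe, hbq_pow]
    calc ‖φ (b t)‖ ^ (n + 1) = ‖φ (((bq ((n+1) • t) : Bq T hT) : C))‖ := by rw [e1, e2]
      _ ≤ ‖((bq ((n+1) • t) : Bq T hT) : C)‖ * ‖(1 : C)‖ :=
          AlgHom.norm_apply_le_self_mul_norm_one φ _
      _ ≤ M0 T hT * M0 T hT := by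
          refine mul_le_mul ?_ hnorm_one_C (norm_nonneg _) (M0_nonneg T hT)
          rw [hnorm_coe]; exact qn_dl_le T hT _
  -- each set `K t` is nonempty
  have hlow : ∀ t : S, ∃ φ : WeakDual.characterSpace ℂ C, 1 ≤ ‖φ (b t)‖ := by
    intro t
    have hsr : 1 ≤ spectralRadius ℂ (b t) := by
      refine ge_of_tendsto (spectrum.pow_nnnorm_pow_one_div_tendsto_nhds_spectralRadius (b t))
        (eventually_atTop.2 ⟨1, fun n hn => ?_⟩)
      have hnn : (1 : ℝ≥0∞) ≤ (‖b t ^ n‖₊ : ℝ≥0∞) := by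
        have : (1 : ℝ) ≤ ‖b t ^ n‖ := by
          have e2 : (b t : C) ^ n = ((bq (n • t) : Bq T hT) : C) := by
            rw [hb, ← hpow_coe, hbq_pow]
          rw [e2, hnorm_coe]
          exact one_le_qn_dl T hT h1 _
        rw [← ENNReal.coe_one, ENNReal.coe_le_coe, ← NNReal.coe_le_coe]
        simpa [coe_nnnorm] using this
      calc (1 : ℝ≥0∞) = 1 ^ (1 / n : ℝ) := (ENNReal.one_rpow _).symm
        _ ≤ (‖b t ^ n‖₊ : ℝ≥0∞) ^ (1 / n : ℝ) :=
            ENNReal.rpow_le_rpow hnn (by positivity)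
    obtain ⟨z, hz, hznorm⟩ := spectrum.exists_nnnorm_eq_spectralRadius (b t)
    obtain ⟨φ, hφ⟩ := WeakDual.CharacterSpace.mem_spectrum_iff_exists.mp hz
    refine ⟨φ, ?_⟩
    rw [hφ]
    have : (1 : ℝ≥0∞) ≤ (‖z‖₊ : ℝ≥0∞) := hznorm ▸ hsr
    rw [← ENNReal.coe_one, ENNReal.coe_le_coe, ← NNReal.coe_le_coe] at this
    simpa [coe_nnnorm] using this
  -- find a character that is unimodular on all `b t` simultaneously
  set K : S → Set (WeakDual.characterSpace ℂ C) := fun t => {φ | 1 ≤ ‖φ (b t)‖} with hK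
  have hKclosed : ∀ t, IsClosed (K t) := by
    intro t
    have hcont : Continuous fun φ : WeakDual.characterSpace ℂ C => ‖φ (b t)‖ :=
      ((WeakDual.eval_continuous (b t)).comp continuous_subtype_val).norm
    exact isClosed_le continuous_const hcont
  have hbsum : ∀ u : Finset S, b (∑ t ∈ u, t) = ∏ t ∈ u, b t := by
    intro u
    induction u using Finset.cons_induction with
    | empty => simpa using hb_zero
    | cons a v hav ih => rw [Finset.sum_cons, Finset.prod_cons, hb_add, ih]
  have hfin : ∀ u : Finset S, (Set.univ ∩ ⋂ t ∈ u, K t).Nonempty := by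
    intro u
    obtain ⟨φ, hφ⟩ := hlow (∑ t ∈ u, t)
    refine ⟨φ, Set.mem_univ _, Set.mem_iInter₂.2 fun t ht => ?_⟩
    have hprod : (1 : ℝ) ≤ ∏ t ∈ u, ‖φ (b t)‖ := by
      rw [← norm_prod, ← map_prod, ← hbsum u]
      exact hφ
    have herase : ∏ t' ∈ u.erase t, ‖φ (b t')‖ ≤ 1 :=
      Finset.prod_le_one (fun i _ => norm_nonneg _) (fun i _ => hupper φ i)
    have hmul : ‖φ (b t)‖ * ∏ t' ∈ u.erase t, ‖φ (b t')‖ = ∏ t ∈ u, ‖φ (b t)‖ :=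
      Finset.mul_prod_erase u (fun t' => ‖φ (b t')‖) ht
    show (1:ℝ) ≤ ‖φ (b t)‖
    nlinarith [hprod, hmul, herase, norm_nonneg (φ (b t))]
  obtain ⟨φ, -, hφall⟩ := isCompact_univ.inter_iInter_nonempty K hKclosed hfin
  have hφmem : ∀ t : S, 1 ≤ ‖φ (b t)‖ := fun t => Set.mem_iInter.1 hφall t
  -- the character of `S`
  refine ⟨fun s => φ (b s), ⟨?_, ?_, fun s => le_antisymm (hupper φ s) (hφmem s)⟩, ?_⟩
  · show φ (b 0) = 1
    rw [hb_zero, map_one]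
  · intro s t
    show φ (b (s + t)) = φ (b s) * φ (b t)
    rw [hb_add, map_mul]
  · intro n s β
    set x : Bq T hT := ∑ k, β k • bq (s k) with hx
    have hcoe_x : ((x : Bq T hT) : C) = ∑ k, β k • b (s k) := by
      rw [hx]
      induction (Finset.univ : Finset (Fin n)) using Finset.cons_induction with
      | empty => simpa using UniformSpace.Completion.coe_zero
      | cons a v hav ih =>
          rw [Finset.sum_cons, Finset.sum_cons, UniformSpace.Completion.coe_add,
            UniformSpace.Completion.coe_smul, ih]
    have hphi_x : phi T hT x = ∑ k, β k • T (s k) := by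
      rw [hx]
      show phi T hT (∑ k, β k • (dl (s k) : MonoidAlgebra ℂ (Multiplicative S))) = _; rw [map_sum]
      refine Finset.sum_congr rfl fun k _ => ?_
      rw [map_smul]
      congr 1
      exact phi_dl T hT (s k)
    have hLHS : ∑ k, β k * φ (b (s k)) = φ ((x : C)) := by
      rw [hcoe_x, map_sum]
      refine Finset.sum_congr rfl fun k _ => ?_
      rw [map_smul, smul_eq_mul]
    -- power bound
    have hpowbound : ∀ m : ℕ,
        ‖φ ((x : C))‖ ^ (m + 1) ≤ (M0 T hT * M0 T hT) * ‖phi T hT x‖ ^ (m + 1) := by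
      intro m
      have e1 : ‖φ ((x : C))‖ ^ (m + 1) = ‖φ (((x ^ (m+1) : Bq T hT) : C))‖ := by
        rw [← norm_pow, ← map_pow, hpow_coe]
      calc ‖φ ((x : C))‖ ^ (m + 1) = ‖φ (((x ^ (m+1) : Bq T hT) : C))‖ := e1
        _ ≤ ‖((x ^ (m+1) : Bq T hT) : C)‖ * ‖(1 : C)‖ :=
            AlgHom.norm_apply_le_self_mul_norm_one φ _
        _ = qn T hT (x ^ (m+1)) * ‖(1 : C)‖ := by rw [hnorm_coe]
        _ ≤ (M0 T hT * ‖phi T hT x‖ ^ (m+1)) * M0 T hT :=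
            mul_le_mul (qn_pow_le T hT x (m+1) (Nat.succ_pos m)) hnorm_one_C (norm_nonneg _)
              (mul_nonneg (M0_nonneg T hT) (pow_nonneg (norm_nonneg _) _))
        _ = (M0 T hT * M0 T hT) * ‖phi T hT x‖ ^ (m + 1) := by ring
    have hfinal : ‖φ ((x : C))‖ ≤ ‖phi T hT x‖ :=
      StabAux.le_of_pow_le_pow (norm_nonneg _) (norm_nonneg _)
        (mul_nonneg (M0_nonneg T hT) (M0_nonneg T hT)) hpowbound
    show ‖∑ k, β k * φ (b (s k))‖ ≤ ‖∑ k, β k • T (s k)‖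
    calc ‖∑ k, β k * φ (b (s k))‖ = ‖φ ((x : C))‖ := by rw [hLHS]
      _ ≤ ‖phi T hT x‖ := hfinal
      _ = ‖∑ k, β k • T (s k)‖ := by rw [hphi_x]

end Existence

/-- Stability theorem: for a bounded representation `T : S → A` of a
commutative monoid in a unital complex Banach algebra, the following are equivalent:
(a) the unitary spectrum of `T` is empty; (b) `T(s)ⁿ → 0` for some `s`;
(c) `0` lies in the norm closure of `T(S)`; (d) the net `(T(s))_{s∈S}` converges to `0`
in norm along the divisibility direction of `S`; (e) `‖T(s)‖ < 1` for some `s`. -/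
theorem stability_tfae {S : Type*} [AddCommMonoid S]
    {A : Type*} [NormedRing A] [NormedAlgebra ℂ A] [CompleteSpace A]
    (T : S → A) (hT : IsBoundedRep T) :
    List.TFAE [
      -- (a) empty unitary spectrum
      ∀ χ : S → ℂ, ¬ InUniSpec T χ,
      -- (b) some T(s) has powers tending to 0
      ∃ s : S, Tendsto (fun n : ℕ => T s ^ n) atTop (𝓝 0),
      -- (c) 0 belongs to the closure of T(S)
      (0 : A) ∈ closure (Set.range T),
      -- (d) the net (T(s)) converges to 0 in norm
      ∀ ε > (0 : ℝ), ∃ s₀ : S, ∀ s : S, (∃ r : S, s₀ + r = s) → ‖T s‖ ≤ ε,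
      -- (e) some T(s) has norm < 1
      ∃ s : S, ‖T s‖ < 1
    ] := by
  obtain ⟨M, hM⟩ := hT.2
  set M' : ℝ := max M 1 with hM'
  have hM'1 : (1 : ℝ) ≤ M' := le_max_right _ _
  have hM'T : ∀ s, ‖T s‖ ≤ M' := fun s => (hM s).trans (le_max_left _ _)
  have hTpow : ∀ (s : S) (n : ℕ), T (n • s) = T s ^ n := by
    intro s n
    induction n with
    | zero => simpa [zero_nsmul, pow_zero] using hT.1.1
    | succ n ih => rw [succ_nsmul, hT.1.2, ih, pow_succ]
  tfae_have 5 → 4 := by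
    rintro ⟨s, hs⟩ ε hε
    have h0 : Tendsto (fun n : ℕ => ‖T s‖ ^ n * M') atTop (𝓝 0) := by
      simpa using (tendsto_pow_atTop_nhds_zero_of_lt_one (norm_nonneg _) hs).mul_const M'
    obtain ⟨n, hn, hn1⟩ :=
      ((h0.eventually (gt_mem_nhds hε)).and (eventually_ge_atTop 1)).exists
    refine ⟨n • s, ?_⟩
    rintro s' ⟨r, rfl⟩
    rw [hT.1.2, hTpow]
    calc ‖T s ^ n * T r‖ ≤ ‖T s ^ n‖ * ‖T r‖ := norm_mul_le _ _
      _ ≤ ‖T s‖ ^ n * M' :=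
          mul_le_mul (norm_pow_le' _ hn1) (hM'T r) (norm_nonneg _)
            (pow_nonneg (norm_nonneg _) _)
      _ ≤ ε := le_of_lt hn
  tfae_have 4 → 3 := by
    intro h4
    rw [Metric.mem_closure_iff]
    intro ε hε
    obtain ⟨s₀, hs₀⟩ := h4 (ε / 2) (by positivity)
    refine ⟨T s₀, ⟨s₀, rfl⟩, ?_⟩
    rw [dist_zero_left]
    calc ‖T s₀‖ ≤ ε / 2 := hs₀ s₀ ⟨0, add_zero s₀⟩
      _ < ε := by linarith
  tfae_have 3 → 5 := by
    intro h3
    rw [Metric.mem_closure_iff] at h3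
    obtain ⟨y, ⟨s, rfl⟩, hy⟩ := h3 1 one_pos
    exact ⟨s, by rwa [dist_zero_left] at hy⟩
  tfae_have 5 → 2 := by
    rintro ⟨s, hs⟩
    refine ⟨s, squeeze_zero_norm' ?_ (tendsto_pow_atTop_nhds_zero_of_lt_one (norm_nonneg _) hs)⟩
    filter_upwards [eventually_ge_atTop 1] with n hn
    exact norm_pow_le' _ hn
  tfae_have 2 → 5 := by
    rintro ⟨s, hs⟩
    obtain ⟨n, hn, hn1⟩ :=
      ((hs.eventually (Metric.ball_mem_nhds 0 one_pos)).and (eventually_ge_atTop 1)).exists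
    refine ⟨n • s, ?_⟩
    rw [hTpow]
    simpa [dist_zero_right] using Metric.mem_ball.mp hn
  tfae_have 5 → 1 := by
    rintro ⟨s, hs⟩ χ ⟨hchar, hineq⟩
    have h := hineq 1 (fun _ => s) (fun _ => 1)
    simp only [Fin.sum_univ_one, one_mul, one_smul] at h
    rw [hchar.2.2 s] at h
    linarith
  tfae_have 1 → 5 := by
    intro h1
    by_contra h5
    push_neg at h5
    obtain ⟨χ, hχ⟩ := exists_uni_char T hT h5
    exact h1 χ hχ
  tfae_finish
end

section
/- Let S be a commutative monoid, E a complex Banach space, and T : S → L(E) a bounded representation whose fixed space fix(T) is finite-dimensional. Then there exists a bounded linear projection P on E with range fix(T) such that P∘T(s) = T(s)∘P = P for every s ∈ S. -/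
set_option linter.unusedSectionVars false
set_option maxHeartbeats 1000000


open Filter Topology

universe u

section AuxProof

variable {S : Type*} [AddCommMonoid S]
variable {E : Type*} [NormedAddCommGroup E] [NormedSpace ℂ E]

/-- `B` is a convex combination of the operators `T u`, `u : S`. -/
def ConvComb (T : S → E →L[ℂ] E) (B : E →L[ℂ] E) : Prop :=
  ∃ (m : ℕ) (w : Fin m → ℝ) (u : Fin m → S),
    (∀ i, 0 ≤ w i) ∧ (∑ i, w i) = 1 ∧ B = ∑ i, ((w i : ℂ)) • T (u i)

variable {T : S → E →L[ℂ] E}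

lemma ConvComb.one (hrep : IsRepresentation T) : ConvComb T 1 := by
  refine ⟨1, fun _ => 1, fun _ => 0, fun _ => zero_le_one, by simp, by simp [hrep.1]⟩

lemma ConvComb.norm_le {M : ℝ} (hM : ∀ s, ‖T s‖ ≤ M) {B : E →L[ℂ] E}
    (hB : ConvComb T B) : ‖B‖ ≤ M := by
  obtain ⟨m, w, u, hw, hw1, rfl⟩ := hB
  calc ‖∑ i, ((w i : ℂ)) • T (u i)‖ ≤ ∑ i, ‖((w i : ℂ)) • T (u i)‖ := norm_sum_le _ _
    _ ≤ ∑ i, w i * M := by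
        refine Finset.sum_le_sum fun i _ => ?_
        rw [norm_smul ((w i : ℝ) : ℂ) (T (u i))]
        rw [Complex.norm_real, Real.norm_eq_abs, abs_of_nonneg (hw i)]
        exact mul_le_mul_of_nonneg_left (hM (u i)) (hw i)
    _ = M := by rw [← Finset.sum_mul, hw1, one_mul]

lemma commute_T (hrep : IsRepresentation T) (a b : S) : Commute (T a) (T b) := by
  show T a * T b = T b * T a
  rw [← hrep.2, ← hrep.2, add_comm]

lemma ConvComb.commute_right (hrep : IsRepresentation T) {B : E →L[ℂ] E} (hB : ConvComb T B)
    (a : S) : Commute (T a) B := by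
  obtain ⟨m, w, u, hw, hw1, rfl⟩ := hB
  exact Commute.sum_right _ _ _ fun j _ => (commute_T hrep a (u j)).smul_right _

lemma ConvComb.commute {A B : E →L[ℂ] E} (hrep : IsRepresentation T)
    (hA : ConvComb T A) (hB : ConvComb T B) : A * B = B * A := by
  obtain ⟨m, w, u, hw, hw1, rfl⟩ := hA
  exact Commute.sum_left _ _ _ fun j _ => (hB.commute_right hrep (u j)).smul_left _

lemma ConvComb.mul {A B : E →L[ℂ] E} (hrep : IsRepresentation T)
    (hA : ConvComb T A) (hB : ConvComb T B) : ConvComb T (A * B) := by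
  obtain ⟨m, w, u, hw, hw1, rfl⟩ := hA
  obtain ⟨m', w', u', hw', hw1', rfl⟩ := hB
  refine ⟨m * m', fun k => w (finProdFinEquiv.symm k).1 * w' (finProdFinEquiv.symm k).2,
    fun k => u (finProdFinEquiv.symm k).1 + u' (finProdFinEquiv.symm k).2,
    fun k => mul_nonneg (hw _) (hw' _), ?_, ?_⟩
  · rw [← Equiv.sum_comp finProdFinEquiv (fun k => w (finProdFinEquiv.symm k).1 * w' (finProdFinEquiv.symm k).2)]
    simp only [Equiv.symm_apply_apply]
    rw [Fintype.sum_prod_type, ← Finset.sum_mul_sum]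
    · rw [hw1, hw1', one_mul]
  · rw [← Equiv.sum_comp finProdFinEquiv (fun k => ((w (finProdFinEquiv.symm k).1 * w' (finProdFinEquiv.symm k).2 : ℝ) : ℂ) • T (u (finProdFinEquiv.symm k).1 + u' (finProdFinEquiv.symm k).2))]
    simp only [Equiv.symm_apply_apply]
    rw [Fintype.sum_prod_type, Finset.sum_mul]
    refine Finset.sum_congr rfl fun i _ => ?_
    rw [Finset.mul_sum]
    refine Finset.sum_congr rfl fun j _ => ?_
    rw [hrep.2, Complex.ofReal_mul, mul_smul, smul_mul_assoc, mul_smul_comm]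

lemma ConvComb.fix {B : E →L[ℂ] E} (hB : ConvComb T B) {z : E}
    (hz : ∀ s, T s z = z) : B z = z := by
  obtain ⟨m, w, u, hw, hw1, rfl⟩ := hB
  rw [ContinuousLinearMap.sum_apply]
  simp only [ContinuousLinearMap.smul_apply, hz]
  rw [← Finset.sum_smul, ← Complex.ofReal_sum, hw1, Complex.ofReal_one, one_smul]


/-- The `⋆`-seminorm: sup of `‖B z‖` over convex combinations `B`. -/
noncomputable def starNorm (T : S → E →L[ℂ] E) (z : E) : ℝ :=
  sSup {r | ∃ B, ConvComb T B ∧ r = ‖B z‖}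

variable (hrep : IsRepresentation T) {M : ℝ} (hM1 : 1 ≤ M) (hM : ∀ s, ‖T s‖ ≤ M)

section
include hrep hM1 hM

lemma starSet_nonempty (z : E) : {r | ∃ B, ConvComb T B ∧ r = ‖B z‖}.Nonempty :=
  ⟨‖z‖, 1, ConvComb.one hrep, by simp⟩

lemma starSet_bdd (z : E) : BddAbove {r | ∃ B, ConvComb T B ∧ r = ‖B z‖} := by
  refine ⟨M * ‖z‖, fun r hr => ?_⟩
  obtain ⟨B, hB, rfl⟩ := hr
  exact (B.le_opNorm z).trans (mul_le_mul_of_nonneg_right (hB.norm_le hM) (norm_nonneg z))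

lemma starNorm_le (z : E) : starNorm T z ≤ M * ‖z‖ := by
  refine Real.sSup_le (fun r hr => ?_) (mul_nonneg (zero_le_one.trans hM1) (norm_nonneg z))
  obtain ⟨B, hB, rfl⟩ := hr
  exact (B.le_opNorm z).trans (mul_le_mul_of_nonneg_right (hB.norm_le hM) (norm_nonneg z))

lemma le_starNorm (z : E) : ‖z‖ ≤ starNorm T z :=
  le_csSup (starSet_bdd hrep hM1 hM z) ⟨1, ConvComb.one hrep, by simp⟩

lemma starNorm_nonneg (z : E) : 0 ≤ starNorm T z :=
  (norm_nonneg z).trans (le_starNorm hrep hM1 hM z)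

lemma starNorm_add (x y : E) : starNorm T (x + y) ≤ starNorm T x + starNorm T y := by
  refine Real.sSup_le (fun r hr => ?_) (add_nonneg (starNorm_nonneg hrep hM1 hM x)
    (starNorm_nonneg hrep hM1 hM y))
  obtain ⟨B, hB, rfl⟩ := hr
  calc ‖B (x + y)‖ ≤ ‖B x‖ + ‖B y‖ := by rw [map_add]; exact norm_add_le _ _
    _ ≤ starNorm T x + starNorm T y :=
      add_le_add (le_csSup (starSet_bdd hrep hM1 hM x) ⟨B, hB, rfl⟩)
        (le_csSup (starSet_bdd hrep hM1 hM y) ⟨B, hB, rfl⟩)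

lemma starNorm_smul (c : ℝ) (hc : 0 ≤ c) (z : E) :
    starNorm T (c • z) = c * starNorm T z := by
  have hset : {r | ∃ B, ConvComb T B ∧ r = ‖B (c • z)‖}
      = (fun r => c * r) '' {r | ∃ B, ConvComb T B ∧ r = ‖B z‖} := by
    ext r
    constructor
    · rintro ⟨B, hB, rfl⟩
      refine ⟨‖B z‖, ⟨B, hB, rfl⟩, ?_⟩
      rw [B.map_smul_of_tower, norm_smul, Real.norm_eq_abs, abs_of_nonneg hc]
    · rintro ⟨r, ⟨B, hB, rfl⟩, rfl⟩
      exact ⟨B, hB, by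
        rw [B.map_smul_of_tower, norm_smul, Real.norm_eq_abs, abs_of_nonneg hc]⟩
  open Pointwise in
  have himg : (fun r => c * r) '' {r | ∃ B, ConvComb T B ∧ r = ‖B z‖}
      = c • {r | ∃ B, ConvComb T B ∧ r = ‖B z‖} := by
    ext r; simp [Set.mem_smul_set, smul_eq_mul, eq_comm]
  open Pointwise in
  rw [starNorm, hset, himg, Real.sSup_smul_of_nonneg hc, smul_eq_mul]
  rfl

lemma starNorm_apply_le {A : E →L[ℂ] E} (hA : ConvComb T A) (z : E) :
    starNorm T (A z) ≤ starNorm T z := by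
  refine Real.sSup_le (fun r hr => ?_) (starNorm_nonneg hrep hM1 hM z)
  obtain ⟨B, hB, rfl⟩ := hr
  have : B (A z) = (B * A) z := rfl
  rw [this]
  exact le_csSup (starSet_bdd hrep hM1 hM z) ⟨B * A, hB.mul hrep hA, rfl⟩


end

/-- The sublinear functional `p x = inf_A ‖A x‖_⋆`. -/
noncomputable def pFun (T : S → E →L[ℂ] E) (x : E) : ℝ :=
  sInf {r | ∃ A, ConvComb T A ∧ r = starNorm T (A x)}

section
include hrep hM1 hM

lemma pSet_nonempty (x : E) : {r | ∃ A, ConvComb T A ∧ r = starNorm T (A x)}.Nonempty :=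
  ⟨starNorm T x, 1, ConvComb.one hrep, by simp⟩

lemma pSet_bddBelow (x : E) : BddBelow {r | ∃ A, ConvComb T A ∧ r = starNorm T (A x)} :=
  ⟨0, fun r hr => by obtain ⟨A, hA, rfl⟩ := hr; exact starNorm_nonneg hrep hM1 hM _⟩

lemma pFun_nonneg (x : E) : 0 ≤ pFun T x :=
  le_csInf (pSet_nonempty hrep hM1 hM x) fun r hr => by
    obtain ⟨A, hA, rfl⟩ := hr; exact starNorm_nonneg hrep hM1 hM _

lemma pFun_le_starNorm_apply {A : E →L[ℂ] E} (hA : ConvComb T A) (x : E) :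
    pFun T x ≤ starNorm T (A x) :=
  csInf_le (pSet_bddBelow hrep hM1 hM x) ⟨A, hA, rfl⟩

lemma pFun_le (x : E) : pFun T x ≤ M * ‖x‖ :=
  ((pFun_le_starNorm_apply hrep hM1 hM (ConvComb.one hrep) x).trans
    (by simpa using starNorm_le hrep hM1 hM x))

lemma pFun_add (x y : E) : pFun T (x + y) ≤ pFun T x + pFun T y := by
  refine le_of_forall_pos_le_add fun ε hε => ?_
  obtain ⟨a, ⟨A, hA, rfl⟩, hlt₁⟩ :=
    Real.lt_sInf_add_pos (pSet_nonempty hrep hM1 hM x) (half_pos hε)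
  obtain ⟨b, ⟨B, hB, rfl⟩, hlt₂⟩ :=
    Real.lt_sInf_add_pos (pSet_nonempty hrep hM1 hM y) (half_pos hε)
  have h1 : (A * B) x = B (A x) := by rw [hA.commute hrep hB]; rfl
  have h2 : (A * B) y = A (B y) := rfl
  have := pFun_le_starNorm_apply hrep hM1 hM (hA.mul hrep hB) (x + y)
  rw [map_add] at this
  calc pFun T (x + y) ≤ starNorm T ((A * B) x + (A * B) y) := this
    _ ≤ starNorm T ((A * B) x) + starNorm T ((A * B) y) := starNorm_add hrep hM1 hM _ _
    _ ≤ starNorm T (A x) + starNorm T (B y) := by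
        rw [h1, h2]
        exact add_le_add (starNorm_apply_le hrep hM1 hM hB _) (starNorm_apply_le hrep hM1 hM hA _)
    _ ≤ (pFun T x + ε / 2) + (pFun T y + ε / 2) := add_le_add hlt₁.le hlt₂.le
    _ = pFun T x + pFun T y + ε := by ring

lemma pFun_smul (c : ℝ) (hc : 0 < c) (x : E) : pFun T (c • x) = c * pFun T x := by
  have hset : {r | ∃ A, ConvComb T A ∧ r = starNorm T (A (c • x))}
      = (fun r => c * r) '' {r | ∃ A, ConvComb T A ∧ r = starNorm T (A x)} := by
    ext r
    constructor
    · rintro ⟨A, hA, rfl⟩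
      exact ⟨starNorm T (A x), ⟨A, hA, rfl⟩, by
        rw [A.map_smul_of_tower, starNorm_smul hrep hM1 hM c hc.le]⟩
    · rintro ⟨r, ⟨A, hA, rfl⟩, rfl⟩
      exact ⟨A, hA, by rw [A.map_smul_of_tower, starNorm_smul hrep hM1 hM c hc.le]⟩
  open Pointwise in
  have himg : (fun r => c * r) '' {r | ∃ A, ConvComb T A ∧ r = starNorm T (A x)}
      = c • {r | ∃ A, ConvComb T A ∧ r = starNorm T (A x)} := by
    ext r; simp [Set.mem_smul_set, smul_eq_mul, eq_comm]
  open Pointwise in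
  rw [pFun, hset, himg, Real.sInf_smul_of_nonneg hc.le, smul_eq_mul]
  rfl

lemma le_pFun_of_fix {z : E} (hz : ∀ s, T s z = z) : ‖z‖ ≤ pFun T z :=
  le_csInf (pSet_nonempty hrep hM1 hM z) fun r hr => by
    obtain ⟨A, hA, rfl⟩ := hr
    rw [hA.fix hz]
    exact le_starNorm hrep hM1 hM z

end

section
include hrep hM1 hM

lemma avg_conv (s : S) {n : ℕ} (hn : n ≠ 0) :
    ConvComb T (∑ i : Fin n, (((n : ℝ)⁻¹ : ℝ) : ℂ) • T ((i : ℕ) • s)) := by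
  refine ⟨n, fun _ => (n : ℝ)⁻¹, fun i => (i : ℕ) • s, fun _ => by positivity, ?_, rfl⟩
  rw [Finset.sum_const, Finset.card_univ, Fintype.card_fin, nsmul_eq_mul,
    mul_inv_cancel₀ (Nat.cast_ne_zero.mpr hn)]

lemma avg_apply (s : S) (x : E) (n : ℕ) :
    (∑ i : Fin n, (((n : ℝ)⁻¹ : ℝ) : ℂ) • T ((i : ℕ) • s)) (x - T s x)
      = (((n : ℝ)⁻¹ : ℝ) : ℂ) • (x - T (n • s) x) := by
  have key : ∀ i : ℕ, T (i • s) (T s x) = T ((i + 1) • s) x := by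
    intro i
    rw [succ_nsmul, hrep.2]
    rfl
  have h0 : T ((0 : ℕ) • s) x = x := by rw [zero_nsmul, hrep.1]; rfl
  rw [ContinuousLinearMap.sum_apply]
  simp only [ContinuousLinearMap.smul_apply, key]
  calc ∑ i : Fin n, (((n : ℝ)⁻¹ : ℝ) : ℂ) • (T ((i : ℕ) • s)) (x - T s x)
      = (((n : ℝ)⁻¹ : ℝ) : ℂ) • ∑ i : Fin n,
          ((T ((i : ℕ) • s)) x - (T (((i : ℕ) + 1) • s)) x) := by
        rw [Finset.smul_sum]
        refine Finset.sum_congr rfl fun i _ => ?_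
        rw [map_sub, key]
    _ = (((n : ℝ)⁻¹ : ℝ) : ℂ) • (x - T (n • s) x) := by
        rw [Fin.sum_univ_eq_sum_range (fun i => (T (i • s)) x - (T ((i + 1) • s)) x),
          Finset.sum_range_sub' (fun i => (T (i • s)) x), h0]

lemma pFun_le_of_bound {y : E} (C : ℝ) (hC : 0 ≤ C)
    (h : ∀ n : ℕ, n ≠ 0 → pFun T y ≤ C / n) : pFun T y ≤ 0 := by
  have : ∀ ε > 0, pFun T y ≤ 0 + ε := by
    intro ε hε
    obtain ⟨n, hn⟩ := exists_nat_gt (C / ε)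
    have hn0 : 0 < (n : ℝ) := lt_of_le_of_lt (div_nonneg hC hε.le) hn
    have hn0' : n ≠ 0 := by exact_mod_cast hn0.ne'
    refine (h n hn0').trans ?_
    rw [zero_add, div_le_iff₀ hn0]
    calc C = (C / ε) * ε := by field_simp
      _ ≤ (n : ℝ) * ε := mul_le_mul_of_nonneg_right hn.le hε.le
      _ = ε * n := mul_comm _ _
  exact le_of_forall_pos_le_add this

lemma pFun_sub_nonpos (s : S) (x : E) :
    pFun T (x - T s x) ≤ 0 ∧ pFun T (T s x - x) ≤ 0 := by
  have hnorm : ∀ n : ℕ, ‖(((n : ℝ)⁻¹ : ℝ) : ℂ) • (x - T (n • s) x)‖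
      ≤ (n : ℝ)⁻¹ * ((1 + M) * ‖x‖) := by
    intro n
    rw [norm_smul, Complex.norm_real, Real.norm_eq_abs,
      abs_of_nonneg (by positivity : (0:ℝ) ≤ (n : ℝ)⁻¹)]
    refine mul_le_mul_of_nonneg_left ?_ (by positivity)
    calc ‖x - T (n • s) x‖ ≤ ‖x‖ + ‖T (n • s) x‖ := norm_sub_le _ _
      _ ≤ ‖x‖ + M * ‖x‖ := by
          gcongr
          exact ((T (n • s)).le_opNorm x).trans
            (mul_le_mul_of_nonneg_right (hM _) (norm_nonneg x))
      _ = (1 + M) * ‖x‖ := by ring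
  have hbound : ∀ n : ℕ, n ≠ 0 → ∀ y : E,
      ‖(∑ i : Fin n, (((n : ℝ)⁻¹ : ℝ) : ℂ) • T ((i : ℕ) • s)) y‖
        ≤ (n : ℝ)⁻¹ * ((1 + M) * ‖x‖) →
      pFun T y ≤ M * ((1 + M) * ‖x‖) / n := by
    intro n hn y hy
    have h1 := pFun_le_starNorm_apply hrep hM1 hM (avg_conv hrep hM1 hM s hn) y
    refine h1.trans ((starNorm_le hrep hM1 hM _).trans ?_)
    rw [div_eq_mul_inv, mul_comm (M * ((1 + M) * ‖x‖)) _, ← mul_assoc, mul_comm ((n:ℝ)⁻¹) M,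
      mul_assoc]
    exact mul_le_mul_of_nonneg_left hy (zero_le_one.trans hM1)
  have hC : 0 ≤ M * ((1 + M) * ‖x‖) := by positivity
  constructor
  · refine pFun_le_of_bound hrep hM1 hM _ hC fun n hn => ?_
    refine hbound n hn _ ?_
    rw [avg_apply hrep hM1 hM s x n]
    exact hnorm n
  · refine pFun_le_of_bound hrep hM1 hM _ hC fun n hn => ?_
    refine hbound n hn _ ?_
    have : T s x - x = -(x - T s x) := (neg_sub _ _).symm
    rw [this, map_neg, norm_neg, avg_apply hrep hM1 hM s x n]
    exact hnorm n


end

include hrep hM1 hM in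
lemma exists_invariant_functional (F : Submodule ℂ E)
    (hmem : ∀ z : E, z ∈ F ↔ ∀ s, T s z = z) (ψ : F →L[ℂ] ℂ) :
    ∃ φ : E →L[ℂ] ℂ, (∀ z : F, φ z = ψ z) ∧ ∀ (s : S) (x : E), φ (T s x) = φ x := by
  -- the real-linear partial functional `re ∘ ψ` on `F`
  set pm : E →ₗ.[ℝ] ℝ :=
    { domain := F.restrictScalars ℝ
      toFun :=
      { toFun := fun z => (ψ ⟨z.1, z.2⟩).re
        map_add' := by
          intro a b
          rw [← Complex.add_re, ← map_add]
          rfl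
        map_smul' := by
          intro c a
          have h1 : (⟨(c • a).1, (c • a).2⟩ : F) = ((c : ℂ) • (⟨a.1, a.2⟩ : F) : F) := by
            apply Subtype.ext
            show c • (a : E) = (c : ℂ) • (a : E)
            rw [← Complex.coe_algebraMap, algebraMap_smul]
          show (ψ ⟨(c • a).1, (c • a).2⟩).re = (RingHom.id ℝ) c • (ψ ⟨a.1, a.2⟩).re
          rw [h1, map_smul]
          simp } } with hpm
  have hdom : ∀ z : E, z ∈ F → z ∈ pm.domain := fun z hz => by
    simpa [hpm, Submodule.restrictScalars_mem] using hz
  have hψnn : (0:ℝ) ≤ ‖ψ‖ := norm_nonneg ψ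
  have hpmle : ∀ x : pm.domain, pm x ≤ ‖ψ‖ * pFun T x := by
    intro x
    have hx : (x : E) ∈ F := x.2
    calc pm x = (ψ ⟨x.1, hx⟩).re := rfl
      _ ≤ ‖ψ ⟨x.1, hx⟩‖ := Complex.re_le_norm _
      _ ≤ ‖ψ‖ * ‖(x : E)‖ := by
          simpa using ψ.le_opNorm (⟨x.1, hx⟩ : F)
      _ ≤ ‖ψ‖ * pFun T x := by
          refine mul_le_mul_of_nonneg_left ?_ hψnn
          exact le_pFun_of_fix hrep hM1 hM fun s => ((hmem _).mp hx) s
  obtain ⟨g, hg1, hg2⟩ := exists_extension_of_le_sublinear pm (fun x => ‖ψ‖ * pFun T x)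
    (fun c hc x => by rw [pFun_smul hrep hM1 hM c hc]; ring)
    (fun x y => by
      have := pFun_add hrep hM1 hM x y
      calc ‖ψ‖ * pFun T (x + y) ≤ ‖ψ‖ * (pFun T x + pFun T y) :=
            mul_le_mul_of_nonneg_left this hψnn
        _ = ‖ψ‖ * pFun T x + ‖ψ‖ * pFun T y := by ring)
    hpmle
  -- invariance of g
  have hginv : ∀ (s : S) (x : E), g (T s x) = g x := by
    intro s x
    have h1 : g (T s x - x) ≤ 0 :=
      (hg2 _).trans (mul_nonpos_of_nonneg_of_nonpos hψnn (pFun_sub_nonpos hrep hM1 hM s x).2)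
    have h2 : g (x - T s x) ≤ 0 :=
      (hg2 _).trans (mul_nonpos_of_nonneg_of_nonpos hψnn (pFun_sub_nonpos hrep hM1 hM s x).1)
    rw [map_sub] at h1 h2
    linarith
  -- continuity of g
  have hgbdd : ∀ x : E, ‖g x‖ ≤ (‖ψ‖ * M) * ‖x‖ := by
    intro x
    rw [Real.norm_eq_abs, abs_le]
    constructor
    · have := (hg2 (-x)).trans (mul_le_mul_of_nonneg_left (pFun_le hrep hM1 hM (-x)) hψnn)
      rw [map_neg, norm_neg, ← mul_assoc] at this
      linarith
    · have := (hg2 x).trans (mul_le_mul_of_nonneg_left (pFun_le hrep hM1 hM x) hψnn)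
      rw [← mul_assoc] at this
      exact this
  set gc : E →L[ℝ] ℝ := LinearMap.mkContinuous g (‖ψ‖ * M) hgbdd with hgc
  have hgcg : ∀ x : E, gc x = g x := fun x => rfl
  have hI : (RCLike.I : ℂ) = Complex.I := rfl
  refine ⟨StrongDual.extendRCLike gc, ?_, ?_⟩
  · intro z
    have hz : (z : E) ∈ F := z.2
    have hIz : (Complex.I • (z : E)) ∈ F := by
      have := F.smul_mem Complex.I hz
      simpa using this
    have e1 : g (z : E) = (ψ z).re := by
      have := hg1 ⟨(z : E), hdom _ hz⟩
      rw [this]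
      rfl
    have e2 : g (Complex.I • (z : E)) = (ψ (Complex.I • z)).re := by
      have := hg1 ⟨Complex.I • (z : E), hdom _ hIz⟩
      rw [this]
      show (ψ ⟨Complex.I • (z : E), hIz⟩).re = _
      congr 1
    have e3 : (ψ (Complex.I • z)).re = -(ψ z).im := by
      rw [map_smul]
      simp [Complex.mul_re]
    rw [StrongDual.extendRCLike_apply, hI, hgcg, hgcg, e1, e2, e3]
    apply Complex.ext <;> simp
  · intro s x
    rw [StrongDual.extendRCLike_apply, StrongDual.extendRCLike_apply,
      hI, hgcg, hgcg, hgcg, hgcg, hginv s x, ← map_smul, hginv s (Complex.I • x)]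

end AuxProof

/-- If `T : S → L(E)` is a bounded representation on a complex Banach
space whose fixed space `fix(T) = {x | T(s)x = x for all s}` is finite-dimensional, then
there is a bounded linear projection `P` on `E` with range `fix(T)` satisfying
`P ∘ T(s) = T(s) ∘ P = P` for every `s ∈ S`. -/
theorem exists_invariant_projection_onto_fix {S : Type*} [AddCommMonoid S]
    {E : Type*} [NormedAddCommGroup E] [NormedSpace ℂ E] [CompleteSpace E]
    (T : S → E →L[ℂ] E) (hT : IsBoundedRep T)
    (hfin : FiniteDimensional ℂ (⨅ s : S, LinearMap.ker ((T s - (1 : E →L[ℂ] E) : E →L[ℂ] E) : E →ₗ[ℂ] E) : Submodule ℂ E)) :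
    ∃ P : E →L[ℂ] E, P * P = P ∧
      LinearMap.range (P : E →ₗ[ℂ] E) = (⨅ s : S, LinearMap.ker ((T s - (1 : E →L[ℂ] E) : E →L[ℂ] E) : E →ₗ[ℂ] E) : Submodule ℂ E) ∧
      ∀ s : S, P * T s = P ∧ T s * P = P := by
  classical
  obtain ⟨hrep, M₀, hM₀⟩ := hT
  have hM1 : (1:ℝ) ≤ max M₀ 1 := le_max_right _ _
  have hM : ∀ s, ‖T s‖ ≤ max M₀ 1 := fun s => (hM₀ s).trans (le_max_left _ _)
  have hmem : ∀ z : E,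
      z ∈ (⨅ s : S, LinearMap.ker ((T s - (1 : E →L[ℂ] E) : E →L[ℂ] E) : E →ₗ[ℂ] E) : Submodule ℂ E) ↔
        ∀ s, T s z = z := by
    intro z
    simp only [Submodule.mem_iInf, LinearMap.mem_ker, ContinuousLinearMap.coe_coe, ContinuousLinearMap.coe_sub',
      Pi.sub_apply, ContinuousLinearMap.one_apply, sub_eq_zero]
  haveI := hfin
  set F : Submodule ℂ E := ⨅ s : S, LinearMap.ker ((T s - (1 : E →L[ℂ] E) : E →L[ℂ] E) : E →ₗ[ℂ] E) with hFdef
  let b := Module.finBasis ℂ F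
  choose φ hφ1 hφ2 using fun i =>
    exists_invariant_functional hrep hM1 hM F hmem ((b.coord i).toContinuousLinearMap)
  set P : E →L[ℂ] E := ∑ i, (φ i).smulRight ((b i : E)) with hPdef
  have hP : ∀ x : E, P x = ∑ i, φ i x • (b i : E) := by
    intro x
    simp [hPdef, ContinuousLinearMap.sum_apply, ContinuousLinearMap.smulRight_apply]
  have hPmem : ∀ x : E, P x ∈ F := by
    intro x
    rw [hP]
    exact Submodule.sum_mem _ fun i _ => Submodule.smul_mem _ _ (b i).2
  have hPfix : ∀ z : F, P (z : E) = z := by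
    intro z
    rw [hP]
    have hco : ∀ i, φ i (z : E) = b.repr z i := by
      intro i
      rw [hφ1 i z]
      simp [Module.Basis.coord_apply]
    have hsum := congrArg (fun v : F => (v : E)) (b.sum_repr z)
    have heq : (∑ i, φ i (z : E) • (b i : E)) = ∑ i, (b.repr z i) • (b i : E) :=
      Finset.sum_congr rfl fun i _ => by rw [hco i]
    rw [heq, ← hsum]
    norm_cast
  refine ⟨P, ?_, ?_, fun s => ⟨?_, ?_⟩⟩
  · ext x
    exact hPfix ⟨P x, hPmem x⟩
  · apply le_antisymm
    · rintro _ ⟨x, rfl⟩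
      exact hPmem x
    · intro x hx
      exact ⟨x, hPfix ⟨x, hx⟩⟩
  · ext x
    show P (T s x) = P x
    rw [hP, hP]
    exact Finset.sum_congr rfl fun i _ => by rw [hφ2 i s x]
  · ext x
    show T s (P x) = P x
    exact (hmem _).mp (hPmem x) s
end

section
/- Let (X,d) be a complete metric space, J a directed set, and (x_j)_{j∈J} a net in X. Assume that for every ε > 0 there exist a nonempty finite subset F ⊆ X and an index j₀ ∈ J such that min_{x∈F} d(x_j, x) ≤ ε for every j ≥ j₀. Then the net (x_j)_{j∈J} has a subnet that converges in X; equivalently, (x_j)_{j∈J} has a cluster point in X. -/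
open Filter Topology

universe u

/-- Let `(X,d)` be a complete metric space and `(x_j)` a net in `X` such
that for every `ε > 0` there is a nonempty finite set `F ⊆ X` and an index `j₀` with
`min_{y ∈ F} d(x_j, y) ≤ ε` for all `j ≥ j₀`.  Then the net has a cluster point in `X`
(equivalently, a convergent subnet). -/
theorem net_clusterPoint_of_finite_approx {X : Type*} [MetricSpace X] [CompleteSpace X]
    (D : DirIdx.{u}) (x : D.J → X)
    (h : ∀ ε > (0 : ℝ), ∃ F : Finset X, F.Nonempty ∧
      ∃ j₀ : D.J, ∀ j : D.J, D.r j₀ j → ∃ y ∈ F, dist (x j) y ≤ ε) :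
    ∃ p : X, ∀ ε > (0 : ℝ), ∀ j₀ : D.J, ∃ j : D.J, D.r j₀ j ∧ dist (x j) p ≤ ε := by

  haveI : Nonempty D.J := D.nonempty
  set L : Filter D.J := ⨅ j₀, Filter.principal {j | D.r j₀ j} with hL
  have hdir : Directed (· ≥ ·) (fun j₀ => (Filter.principal {j | D.r j₀ j} : Filter D.J)) := by
    intro a b
    obtain ⟨k, hak, hbk⟩ := D.directed a b
    exact ⟨k, Filter.principal_mono.2 fun j hj => D.trans hak hj,
           Filter.principal_mono.2 fun j hj => D.trans hbk hj⟩
  haveI hLne : L.NeBot :=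
    Filter.iInf_neBot_of_directed hdir fun j₀ =>
      Filter.principal_neBot_iff.2 ⟨j₀, D.refl j₀⟩
  obtain ⟨U, hU⟩ := Ultrafilter.exists_le L
  have htail : ∀ j₀, {j | D.r j₀ j} ∈ U := fun j₀ =>
    hU (Filter.mem_iInf_of_mem j₀ (Filter.mem_principal_self _))
  have hc : Cauchy (Filter.map x ↑U) := by
    rw [Metric.cauchy_iff]
    refine ⟨Filter.map_neBot, fun ε hε => ?_⟩
    obtain ⟨F, hFne, j₀, hF⟩ := h (ε/3) (by linarith)
    have hmem : (⋃ y ∈ (F : Set X), x ⁻¹' Metric.closedBall y (ε/3)) ∈ U :=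
      Filter.mem_of_superset (htail j₀) (fun j hj => by
        obtain ⟨y, hyF, hy⟩ := hF j hj
        exact Set.mem_biUnion hyF hy)
    obtain ⟨y, hyF, hyU⟩ := (Ultrafilter.finite_biUnion_mem_iff F.finite_toSet).1 hmem
    refine ⟨Metric.closedBall y (ε/3), Filter.mem_map.2 hyU, fun a ha b hb => ?_⟩
    have := dist_triangle a y b
    rw [Metric.mem_closedBall] at ha hb
    rw [dist_comm y b] at this
    linarith
  obtain ⟨p, hp⟩ := CompleteSpace.complete hc
  refine ⟨p, fun ε hε j₀ => ?_⟩
  have hball : x ⁻¹' Metric.closedBall p ε ∈ U :=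
    Filter.mem_map.1 (hp (Metric.closedBall_mem_nhds p hε))
  obtain ⟨j, hj1, hj2⟩ := Filter.nonempty_of_mem (Filter.inter_mem (htail j₀) hball)
  exact ⟨j, hj1, hj2⟩
end

section
/- Let S be a commutative monoid, E a complex Banach space, and T : S → L(E) a bounded representation such that the constant-one character 𝟙_S does not belong to σ_uni(T). Then there exist finitely many elements s₁,…,sₙ ∈ S such that E = range(id − T(s₁)) + ⋯ + range(id − T(sₙ)). -/
open Filter Topology

universe u

/-- If the constant-one character `𝟙_S` does not belong to the unitary
spectrum of a bounded representation `T : S → L(E)`, then there are finitely many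
`s₁, …, sₙ ∈ S` with `E = range(id − T(s₁)) + ⋯ + range(id − T(sₙ))`. -/
theorem range_sum_eq_top_of_one_not_mem_uniSpec {S : Type*} [AddCommMonoid S]
    {E : Type*} [NormedAddCommGroup E] [NormedSpace ℂ E] [CompleteSpace E]
    (T : S → E →L[ℂ] E) (hT : IsBoundedRep T)
    (h : ¬ InUniSpec T (fun _ : S => (1 : ℂ))) :
    ∃ (n : ℕ) (s : Fin n → S),
      (⨆ k : Fin n, LinearMap.range (((1 : E →L[ℂ] E) - T (s k) : E →L[ℂ] E) : E →ₗ[ℂ] E)) = ⊤ := by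
  have hchar : IsUnitaryChar (fun _ : S => (1 : ℂ)) :=
    ⟨rfl, fun _ _ => (one_mul 1).symm, fun _ => norm_one⟩
  rw [InUniSpec, not_and] at h
  push_neg at h
  obtain ⟨n, s, β, hlt⟩ := h hchar
  refine ⟨n, s, ?_⟩
  set A : E →L[ℂ] E := ∑ k, β k • T (s k) with hA
  set c : ℂ := ∑ k, β k with hc
  have hnorm : ‖A‖ < ‖c‖ := by simpa [hc] using hlt
  have hc0 : c ≠ 0 := by
    intro h0
    rw [h0, norm_zero] at hnorm
    exact (norm_nonneg A).not_gt hnorm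
  have hsmall : ‖c⁻¹ • A‖ < 1 := by
    rw [norm_smul c⁻¹ A, norm_inv, inv_mul_lt_one₀ (norm_pos_iff.mpr hc0)]
    exact hnorm
  have hunit : IsUnit (c • (1 : E →L[ℂ] E) - A) := by
    have heq : c • (1 : E →L[ℂ] E) - A = c • ((1 : E →L[ℂ] E) - c⁻¹ • A) := by
      rw [smul_sub, smul_smul, mul_inv_cancel₀ hc0, one_smul]
    rw [heq, Algebra.smul_def]
    exact (hc0.isUnit.map (algebraMap ℂ (E →L[ℂ] E))).mul (Units.oneSub _ hsmall).isUnit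
  obtain ⟨u, hu⟩ := hunit
  have hdecomp : c • (1 : E →L[ℂ] E) - A = ∑ k, β k • ((1 : E →L[ℂ] E) - T (s k)) := by
    simp [smul_sub, Finset.sum_sub_distrib, hA, hc, Finset.sum_smul]
  rw [eq_top_iff]
  intro x _
  have hx : x = ∑ k, β k • (((1 : E →L[ℂ] E) - T (s k)) ((↑u⁻¹ : E →L[ℂ] E) x)) := by
    have : (c • (1 : E →L[ℂ] E) - A) ((↑u⁻¹ : E →L[ℂ] E) x) = x := by
      rw [← hu, ← ContinuousLinearMap.mul_apply, u.mul_inv, ContinuousLinearMap.one_apply]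
    rw [hdecomp] at this
    simpa [ContinuousLinearMap.sum_apply] using this.symm
  rw [hx]
  refine Submodule.sum_mem _ fun k _ => Submodule.smul_mem _ _ ?_
  exact le_iSup (fun k => LinearMap.range (((1 : E →L[ℂ] E) - T (s k) : E →L[ℂ] E) : E →ₗ[ℂ] E)) k ⟨_, rfl⟩
end
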